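/- Let Γ be a finitely generated nilpotent group of Hirsch length d and let m be a positive integer. Then the index [Γ : Γ^m] is at most m^d, where Γ^m is the subgroup generated by all m-th powers. -/

import Mathlib

/-- If `A`, `B` are normal subgroups of `G`, `g : G` generates `G` modulo `B`,
and `g ^ m ∈ A`, then `A.index ≤ A.relIndex B * m`. -/
lemma aux_index_le {G : Type*} [Group G] {m : ℕ} (hm : 0 < m)
    (A B : Subgroup G) [A.Normal] [B.Normal] (g : G)
    (hg : ∀ x : G, ∃ n : ℤ, x * (g ^ n)⁻¹ ∈ B) (hgm : g ^ (m : ℤ) ∈ A) :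
    A.index ≤ A.relIndex B * m := by
  set M : Subgroup G := B ⊔ A with hM
  haveI : M.Normal := Subgroup.sup_normal B A
  have hAM : A ≤ M := le_sup_right
  have h1 : A.relIndex M * M.index = A.index := Subgroup.relIndex_mul_index hAM
  have h2 : A.relIndex M = A.relIndex B := Subgroup.relIndex_sup_right B A
  have h3 : M.index ≤ m := by
    have hBM : B ≤ M := le_sup_left
    set q : G → G ⧸ M := QuotientGroup.mk with hq
    have hgm1 : (q g) ^ (m : ℤ) = 1 := by
      rw [← QuotientGroup.mk_zpow, QuotientGroup.eq_one_iff]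
      exact hAM hgm
    have hsurj : Function.Surjective (fun j : Fin m => (q g) ^ (j : ℤ)) := by
      intro y
      obtain ⟨x, rfl⟩ := QuotientGroup.mk_surjective y
      obtain ⟨n, hn⟩ := hg x
      have hx : q x = (q g) ^ n := by
        rw [← QuotientGroup.mk_zpow, QuotientGroup.eq]
        have h' : x⁻¹ * ((x * (g ^ n)⁻¹)⁻¹) * (x⁻¹)⁻¹ ∈ M :=
          Subgroup.Normal.conj_mem ‹M.Normal› _ (inv_mem (hBM hn)) _
        have he : x⁻¹ * ((x * (g ^ n)⁻¹)⁻¹) * (x⁻¹)⁻¹ = x⁻¹ * g ^ n := by group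
        rwa [he] at h'
      have hlt : (n % (m : ℤ)).toNat < m := by
        have h0' : 0 ≤ n % (m : ℤ) := Int.emod_nonneg n (by exact_mod_cast hm.ne')
        have h1' : n % (m : ℤ) < m := Int.emod_lt_of_pos n (by exact_mod_cast hm)
        omega
      refine ⟨⟨(n % (m : ℤ)).toNat, hlt⟩, ?_⟩
      have h0' : 0 ≤ n % (m : ℤ) := Int.emod_nonneg n (by exact_mod_cast hm.ne')
      show (q g) ^ (((n % (m : ℤ)).toNat : ℤ)) = q x
      rw [Int.toNat_of_nonneg h0', hx]
      conv_rhs => rw [← Int.emod_add_mul_ediv n (m : ℤ)]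
      rw [zpow_add, zpow_mul, hgm1, one_zpow, mul_one]
    have : Nat.card (G ⧸ M) ≤ Nat.card (Fin m) :=
      Nat.card_le_card_of_surjective _ hsurj
    simpa [Subgroup.index] using this
  calc A.index = A.relIndex B * M.index := by rw [← h1, h2]
    _ ≤ A.relIndex B * m := Nat.mul_le_mul_left _ h3

theorem index_pow_subgroup_le_pow_hirsch_length (Γ : Type*) [Group Γ]
    [Group.IsNilpotent Γ] (hfg : Group.FG Γ) (d m : ℕ) (hm : 0 < m)
    (H : Fin (d + 1) → Subgroup Γ)
    (h0 : H 0 = ⊥) (htop : H (Fin.last d) = ⊤)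
    (hle : ∀ i : Fin d, H i.castSucc ≤ H i.succ)
    (hnorm : ∀ i : Fin d, ((H i.castSucc).subgroupOf (H i.succ)).Normal)
    (hcyc : ∀ i : Fin d, ∃ g ∈ H i.succ,
      (∀ x ∈ H i.succ, ∃ n : ℤ, x * (g ^ n)⁻¹ ∈ H i.castSucc) ∧
      (∀ n : ℤ, g ^ n ∈ H i.castSucc → n = 0)) :
    (Subgroup.closure {x : Γ | ∃ g : Γ, x = g ^ m}).index ≤ m ^ d := by
  set N : Subgroup Γ := Subgroup.closure {x : Γ | ∃ g : Γ, x = g ^ m} with hNdef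
  haveI hN : N.Normal := by
    constructor
    intro x hx
    refine Subgroup.closure_induction
      (p := fun x _ => ∀ c : Γ, c * x * c⁻¹ ∈ N) ?_ ?_ ?_ ?_ hx
    · rintro y ⟨g, rfl⟩ c
      exact Subgroup.subset_closure ⟨c * g * c⁻¹, conj_pow.symm⟩
    · intro c; simpa using Subgroup.one_mem N
    · intro a b _ _ iha ihb c
      have h : c * (a * b) * c⁻¹ = (c * a * c⁻¹) * (c * b * c⁻¹) := by group
      rw [h]; exact mul_mem (iha c) (ihb c)
    · intro a _ iha c
      have h : c * a⁻¹ * c⁻¹ = (c * a * c⁻¹)⁻¹ := by group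
      rw [h]; exact inv_mem (iha c)
  have main : ∀ i : Fin (d + 1), N.relIndex (H i) ≤ m ^ (i : ℕ) := by
    intro i
    induction i using Fin.induction with
    | zero => simp [h0, Subgroup.relIndex_bot_right]
    | succ i ih =>
      obtain ⟨g, hgL, hgen, -⟩ := hcyc i
      set L := H i.succ
      set K := H i.castSucc
      set A : Subgroup L := N.subgroupOf L with hA
      set B : Subgroup L := K.subgroupOf L with hB
      haveI : A.Normal := Subgroup.normal_subgroupOf
      haveI : B.Normal := hnorm i
      have key : A.index ≤ A.relIndex B * m := by
        refine aux_index_le hm A B ⟨g, hgL⟩ ?_ ?_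
        · rintro ⟨x, hxL⟩
          obtain ⟨n, hn⟩ := hgen x hxL
          exact ⟨n, by simpa [hB, Subgroup.mem_subgroupOf] using hn⟩
        · simp only [hA, Subgroup.mem_subgroupOf]
          push_cast
          exact Subgroup.subset_closure ⟨g, by rw [← zpow_natCast]⟩
      have e1 : A.index = N.relIndex L := rfl
      have e2 : A.relIndex B = N.relIndex K :=
        Subgroup.relIndex_subgroupOf (hle i)
      rw [e1, e2] at key
      calc N.relIndex L ≤ N.relIndex K * m := key
        _ ≤ m ^ (i : ℕ) * m := Nat.mul_le_mul_right _ ih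
        _ = m ^ ((i.succ : Fin (d+1)) : ℕ) := by rw [Fin.val_succ, pow_succ]
  have := main (Fin.last d)
  rwa [htop, Subgroup.relIndex_top_right, Fin.val_last] at this
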